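/- Let s > 0, σ > 0, α > 0, β = σ². In the scalar case with A = s and Ã = αs, the correction factor K = (s² + σ²)⁻¹(αs² + σ²) satisfies |1 − K⁻¹| ≤ |1 − α⁻¹|, i.e., ‖I − K⁻¹‖ ≤ ‖I − F̃⁻¹F‖ in the 1-dimensional diagonal setting, with equality iff α = 1. -/
import Mathlib


theorem scalar_correction_bound (s σ α : ℝ) (hs : 0 < s) (hσ : 0 < σ) (hα : 0 < α)
    (K : ℝ) (hK : K = (s ^ 2 + σ ^ 2)⁻¹ * (α * s ^ 2 + σ ^ 2)) :
    |1 - K⁻¹| ≤ |1 - α⁻¹| ∧ (|1 - K⁻¹| = |1 - α⁻¹| ↔ α = 1) := by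
  have hs2 : 0 < s ^ 2 := by positivity
  have hD1 : 0 < α * s ^ 2 + σ ^ 2 := by positivity
  have hD2 : 0 < s ^ 2 + σ ^ 2 := by positivity
  have h1 : 1 - K⁻¹ = (α - 1) * (s ^ 2 / (α * s ^ 2 + σ ^ 2)) := by
    rw [hK]
    field_simp
    ring
  have h2 : 1 - α⁻¹ = (α - 1) * (1 / α) := by
    field_simp
  have hfrac : s ^ 2 / (α * s ^ 2 + σ ^ 2) < 1 / α := by
    rw [div_lt_div_iff₀ hD1 hα]
    nlinarith [sq_nonneg σ]
  have hfpos : 0 < s ^ 2 / (α * s ^ 2 + σ ^ 2) := by positivity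
  rw [h1, h2, abs_mul, abs_mul]
  rw [abs_of_pos hfpos, abs_of_pos (by positivity : (0:ℝ) < 1 / α)]
  constructor
  · exact mul_le_mul_of_nonneg_left hfrac.le (abs_nonneg _)
  · constructor
    · intro h
      by_contra hne
      have : |α - 1| ≠ 0 := by
        simp only [ne_eq, abs_eq_zero, sub_eq_zero]
        exact hne
      have hpos : 0 < |α - 1| := lt_of_le_of_ne (abs_nonneg _) (Ne.symm this)
      have := mul_lt_mul_of_pos_left hfrac hpos
      linarith
    · intro h
      simp [h]
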